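/- Let n ≥ 3, t ∈ (0,1), τ ∈ ℝ, and suppose μ ∈ Dⁿ satisfies π_n(μ) = (-6iτt, 3t², -2iτt³, 0, …, 0). Then t² < 1/2. -/

import Mathlib

open Metric Finset

/-- The map whose `k`-th component is the `(k+1)`-st elementary symmetric polynomial. -/
noncomputable def symPoly (n : ℕ) (μ : Fin n → ℂ) : Fin n → ℂ :=
  fun k => ∑ s ∈ Finset.powersetCard ((k : ℕ) + 1) Finset.univ, ∏ i ∈ s, μ i

/-- The symmetrized `n`-disc `𝔾ₙ = πₙ(𝔻ⁿ)`. -/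
def symPolydisc (n : ℕ) : Set (Fin n → ℂ) :=
  {z | ∃ μ : Fin n → ℂ, (∀ i, ‖μ i‖ < 1) ∧ symPoly n μ = z}

/-- If `μ ∈ 𝔻ⁿ` satisfies `πₙ(μ) = (-6iτt, 3t², -2iτt³, 0, …, 0)` with `t ∈ (0,1)` and
`τ ∈ ℝ`, then `t² < 1/2`. -/
theorem t_sq_lt_half (n : ℕ) (hn : 3 ≤ n) (t : ℝ) (ht : t ∈ Set.Ioo (0 : ℝ) 1)
    (τ : ℝ) (μ : Fin n → ℂ) (hμ : ∀ i, ‖μ i‖ < 1)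
    (hπ : symPoly n μ = fun i : Fin n =>
      if (i : ℕ) = 0 then -6 * Complex.I * τ * t
      else if (i : ℕ) = 1 then 3 * (t : ℂ) ^ 2
      else if (i : ℕ) = 2 then -2 * Complex.I * τ * (t : ℂ) ^ 3
      else 0) :
    t ^ 2 < 1 / 2 := by
  classical
  open Polynomial in
  obtain ⟨m, rfl⟩ : ∃ m, n = m + 3 := ⟨n - 3, by omega⟩
  set e1 : ℂ := -6 * Complex.I * τ * t with he1
  set e2 : ℂ := 3 * (t : ℂ) ^ 2 with he2
  set e3 : ℂ := -2 * Complex.I * τ * (t : ℂ) ^ 3 with he3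
  set M : Multiset ℂ := Finset.univ.val.map μ with hM
  have hcard : Multiset.card M = m + 3 := by simp [hM]
  -- esymm values
  have hE : ∀ j : ℕ, (hj : j < m + 3) → M.esymm (j + 1) =
      (if j = 0 then e1 else if j = 1 then e2 else if j = 2 then e3 else 0) := by
    intro j hj
    have := congrFun hπ ⟨j, hj⟩
    simp only [symPoly] at this
    rw [hM, Finset.esymm_map_val]
    exact this
  -- the polynomial
  set Q : ℂ[X] := X^3 - C e1 * X^2 + C e2 * X - C e3 with hQ
  have hQm : Q.Monic := by rw [hQ]; monicity!
  have hQdeg : Q.natDegree = 3 := by rw [hQ]; compute_degree!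
  set P : ℂ[X] := (M.map fun a => X - C a).prod with hP
  have hProots : P.roots = M := roots_multiset_prod_X_sub_C M
  have hPQ : P = X ^ m * Q := by
    rw [hP, Multiset.prod_X_sub_X_eq_sum_esymm, hcard]
    have h4 : Finset.range 4 ⊆ Finset.range (m + 3 + 1) := by
      apply Finset.range_subset_range.2; omega
    rw [← Finset.sum_subset h4]
    · rw [show (4:ℕ) = 3 + 1 from rfl, Finset.sum_range_succ, Finset.sum_range_succ,
        Finset.sum_range_succ, Finset.sum_range_succ, Finset.sum_range_zero]
      have h0 : M.esymm 0 = 1 := by simp [Multiset.esymm]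
      have h1 : M.esymm 1 = e1 := by simpa using hE 0 (by omega)
      have h2 : M.esymm 2 = e2 := by simpa using hE 1 (by omega)
      have h3 : M.esymm 3 = e3 := by simpa using hE 2 (by omega)
      rw [h0, h1, h2, h3]
      rw [show m + 3 - 0 = m + 3 from by omega, show m + 3 - 1 = m + 2 from by omega,
        show m + 3 - 2 = m + 1 from by omega, show m + 3 - 3 = m from by omega, hQ]
      simp only [map_one, pow_add]
      ring
    · intro j hjmem hjnot
      simp only [Finset.mem_range] at hjmem hjnot
      have hj4 : 4 ≤ j := by omega
      have : M.esymm j = 0 := by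
        have := hE (j - 1) (by omega)
        rw [show j - 1 + 1 = j from by omega] at this
        rw [this]
        simp only [if_neg (by omega : j - 1 ≠ 0), if_neg (by omega : j - 1 ≠ 1),
          if_neg (by omega : j - 1 ≠ 2)]
      rw [this]
      simp
  -- roots of Q
  have hQne : Q ≠ 0 := hQm.ne_zero
  have hsplits : Q.Splits := IsAlgClosed.splits Q
  have hQroots_card : Multiset.card Q.roots = 3 := by
    rw [(Polynomial.splits_iff_card_roots).1 hsplits, hQdeg]
  have hQle : Q.roots ≤ M := by
    rw [← hProots, hPQ, Polynomial.roots_mul (mul_ne_zero (pow_ne_zero m X_ne_zero) hQne)]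
    exact Multiset.le_add_left _ _
  obtain ⟨a, b, c, habc⟩ := Multiset.card_eq_three.mp hQroots_card
  have hQprod : Q = (X - C a) * ((X - C b) * ((X - C c) * 1)) := by
    have := hsplits.eq_prod_roots_of_monic hQm
    rw [habc] at this
    simpa using this
  have expand : (X - C a) * ((X - C b) * ((X - C c) * 1)) =
      X^3 - C (a + b + c) * X^2 + C (a*b + a*c + b*c) * X - C (a*b*c) := by
    simp only [map_add, map_mul]
    ring
  have hQeq : X^3 - C e1 * X^2 + C e2 * X - C e3 =
      X^3 - C (a + b + c) * X^2 + C (a*b + a*c + b*c) * X - C (a*b*c) := by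
    rw [← hQ, hQprod, expand]
  have hc2 : e1 = a + b + c := by
    have h := congrArg (fun p => Polynomial.coeff p 2) hQeq
    simp only [Polynomial.coeff_add, Polynomial.coeff_sub, Polynomial.coeff_C_mul,
      Polynomial.coeff_X_pow, Polynomial.coeff_C, Polynomial.coeff_X] at h
    norm_num at h
    linear_combination -h
  have hc1 : e2 = a*b + a*c + b*c := by
    have h := congrArg (fun p => Polynomial.coeff p 1) hQeq
    simp only [Polynomial.coeff_add, Polynomial.coeff_sub, Polynomial.coeff_C_mul,
      Polynomial.coeff_X_pow, Polynomial.coeff_C, Polynomial.coeff_X] at h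
    norm_num at h
    exact h
  -- norms
  have hmemnorm : ∀ x ∈ Q.roots, ‖x‖ < 1 := by
    intro x hx
    have : x ∈ M := Multiset.mem_of_le hQle hx
    rw [hM, Multiset.mem_map] at this
    obtain ⟨i, -, rfl⟩ := this
    exact hμ i
  have ha : ‖a‖ < 1 := hmemnorm a (by rw [habc]; simp)
  have hb : ‖b‖ < 1 := hmemnorm b (by rw [habc]; simp)
  have hc : ‖c‖ < 1 := hmemnorm c (by rw [habc]; simp)
  -- power sum
  have hps : a^2 + b^2 + c^2 = e1^2 - 2*e2 := by
    rw [hc2, hc1]; ring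
  have hval : e1^2 - 2*e2 = ((-(36 * τ^2 + 6) * t^2 : ℝ) : ℂ) := by
    rw [he1, he2]
    push_cast
    rw [show ((-6 : ℂ) * Complex.I * τ * t)^2 = 36 * (Complex.I^2) * τ^2 * t^2 from by ring,
      Complex.I_sq]
    ring
  have hnorm : ‖a^2 + b^2 + c^2‖ = (36 * τ^2 + 6) * t^2 := by
    rw [hps, hval, Complex.norm_real, Real.norm_eq_abs, abs_mul, abs_neg, abs_of_nonneg (by positivity),
      abs_of_nonneg (by positivity)]
  have hlt3 : ‖a^2 + b^2 + c^2‖ < 3 := by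
    calc ‖a^2 + b^2 + c^2‖ ≤ ‖a‖^2 + ‖b‖^2 + ‖c‖^2 := by
          refine le_trans (norm_add_le _ _) ?_
          refine add_le_add (le_trans (norm_add_le _ _) (add_le_add ?_ ?_)) ?_ <;>
            simp [norm_pow]
      _ < 3 := by nlinarith [norm_nonneg a, norm_nonneg b, norm_nonneg c]
  rw [hnorm] at hlt3
  nlinarith [sq_nonneg τ, sq_nonneg t, ht.1, ht.2]
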